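/- arXiv:2405.05773 — 5 statements merged into one kernel-verified Lean document; each statement's English description precedes it below -/
import Mathlib

section
/- Identifiability of the parametric hazard class: if gamma, alpha, tilde-gamma, tilde-alpha > 0 and h(t; gamma, alpha) = h(t; tilde-gamma, tilde-alpha) for all t > 0, then gamma = tilde-gamma and alpha = tilde-alpha. -/
open Filter Real

lemma rpow_tendsto_zero {c : ℝ} (hc : 0 < c) :
    Tendsto (fun t : ℝ => t ^ c) (nhdsWithin 0 (Set.Ioi 0)) (nhds 0) := by
  have h := (Real.continuousAt_rpow_const 0 c (Or.inr hc.le)).tendsto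
  rw [Real.zero_rpow hc.ne'] at h
  exact h.mono_left nhdsWithin_le_nhds

/-- Identifiability of the parametric hazard class: if the hazard functions
`h(t; γ, α) = a(γ, α) * t^(γ-1) * b(t; γ, α)` agree for all `t > 0`, then the
parameters agree. -/
theorem parametric_hazard_class_identifiable
    (a : ℝ → ℝ → ℝ) (b : ℝ → ℝ → ℝ → ℝ)
    (ha_pos : ∀ γ α : ℝ, 0 < γ → 0 < α → 0 < a γ α)
    (ha_inj : ∀ γ : ℝ, 0 < γ → ∀ α α' : ℝ, 0 < α → 0 < α' → a γ α = a γ α' → α = α')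
    (hb_pos : ∀ t γ α : ℝ, 0 < t → 0 < γ → 0 < α → 0 < b t γ α)
    (hb_lim : ∀ γ α : ℝ, 0 < γ → 0 < α →
      Filter.Tendsto (fun t => b t γ α) (nhdsWithin 0 (Set.Ioi 0)) (nhds 1))
    (γ α γ' α' : ℝ) (hγ : 0 < γ) (hα : 0 < α) (hγ' : 0 < γ') (hα' : 0 < α')
    (heq : ∀ t : ℝ, 0 < t →
      a γ α * t ^ (γ - 1) * b t γ α = a γ' α' * t ^ (γ' - 1) * b t γ' α') :
    γ = γ' ∧ α = α' := by
  have hA := ha_pos γ α hγ hα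
  have hA' := ha_pos γ' α' hγ' hα'
  -- key: t ^ (γ - γ') = (a γ' α' * b t γ' α') / (a γ α * b t γ α) for t > 0
  have key : ∀ t : ℝ, 0 < t →
      t ^ (γ - γ') = (a γ' α' * b t γ' α') / (a γ α * b t γ α) := by
    intro t ht
    have hb1 := hb_pos t γ α ht hγ hα
    have hb2 := hb_pos t γ' α' ht hγ' hα'
    have hrp : (0:ℝ) < t ^ (γ' - 1) := Real.rpow_pos_of_pos ht _
    have hrp2 : (0:ℝ) < t ^ (γ - 1) := Real.rpow_pos_of_pos ht _
    have hsub : t ^ (γ - γ') = t ^ (γ - 1) / t ^ (γ' - 1) := by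
      rw [← Real.rpow_sub ht]; ring_nf
    rw [hsub]
    have h := heq t ht
    field_simp
    nlinarith [h, mul_pos hA hb1, mul_pos hA' hb2]
  -- limit of RHS
  have hlim : Tendsto (fun t => (a γ' α' * b t γ' α') / (a γ α * b t γ α))
      (nhdsWithin 0 (Set.Ioi 0)) (nhds (a γ' α' / a γ α)) := by
    have h1 := (hb_lim γ' α' hγ' hα').const_mul (a γ' α')
    have h2 := (hb_lim γ α hγ hα).const_mul (a γ α)
    have := h1.div h2 (by simpa using hA.ne')
    simp only [mul_one] at this; exact this
  have hlimpow : Tendsto (fun t : ℝ => t ^ (γ - γ')) (nhdsWithin 0 (Set.Ioi 0))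
      (nhds (a γ' α' / a γ α)) := by
    refine hlim.congr' ?_
    filter_upwards [self_mem_nhdsWithin] with t ht
    exact (key t ht).symm
  have hγγ : γ = γ' := by
    by_contra hne
    rcases lt_or_gt_of_ne hne with hlt | hgt
    · -- γ < γ' : t ^ (γ' - γ) → 0, but also (t^(γ-γ'))⁻¹ → (a'/a)⁻¹
      have h0 : Tendsto (fun t : ℝ => t ^ (γ' - γ)) (nhdsWithin 0 (Set.Ioi 0)) (nhds 0) :=
        rpow_tendsto_zero (by linarith)
      have hinv : Tendsto (fun t : ℝ => t ^ (γ' - γ)) (nhdsWithin 0 (Set.Ioi 0))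
          (nhds ((a γ' α' / a γ α)⁻¹)) := by
        have := hlimpow.inv₀ (by positivity)
        refine this.congr' ?_
        filter_upwards [self_mem_nhdsWithin] with t ht
        rw [← Real.rpow_neg (le_of_lt ht)]; ring_nf
      have huniq := tendsto_nhds_unique hinv h0
      have hpos : (0:ℝ) < (a γ' α' / a γ α)⁻¹ := by positivity
      rw [huniq] at hpos; exact lt_irrefl 0 hpos
    · have h0 : Tendsto (fun t : ℝ => t ^ (γ - γ')) (nhdsWithin 0 (Set.Ioi 0)) (nhds 0) :=
        rpow_tendsto_zero (by linarith)
      have huniq := tendsto_nhds_unique hlimpow h0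
      have hpos : (0:ℝ) < a γ' α' / a γ α := by positivity
      rw [huniq] at hpos; exact lt_irrefl 0 hpos
  subst hγγ
  refine ⟨rfl, ?_⟩
  -- now t ^ 0 = 1, so a γ' α' / a γ α = 1
  have h1 : Tendsto (fun t : ℝ => t ^ (γ - γ)) (nhdsWithin 0 (Set.Ioi 0)) (nhds 1) := by
    simp only [sub_self, Real.rpow_zero]
    exact tendsto_const_nhds
  have := tendsto_nhds_unique hlimpow h1
  have haeq : a γ α = a γ α' := by
    field_simp at this
    linarith
  exact ha_inj γ hγ α α' hα hα' haeq
end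

section
/- Frailty-variance identification: if sigma > 0 and tilde-sigma > 0 are real numbers with (1 + sigma^2)^(1 + 1/sigma^2) = (1 + tilde-sigma^2)^(1 + 1/tilde-sigma^2), then sigma = tilde-sigma. -/
private lemma gderiv (x : ℝ) (hx : 0 < x) :
    HasDerivAt (fun x : ℝ => (1 + 1 / x) * Real.log (1 + x))
      (-(x ^ 2)⁻¹ * Real.log (1 + x) + (1 + 1 / x) * (1 / (1 + x))) x := by
  have h1 : HasDerivAt (fun x : ℝ => 1 + 1 / x) (-(x ^ 2)⁻¹) x := by
    simpa using (hasDerivAt_inv hx.ne').const_add 1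
  have h2 : HasDerivAt (fun x : ℝ => 1 + x) 1 x := by
    simpa using (hasDerivAt_id x).const_add 1
  have h3 : HasDerivAt (fun x : ℝ => Real.log (1 + x)) (1 / (1 + x)) x := by
    simpa using h2.log (by positivity)
  exact h1.mul h3

private lemma gmono : StrictMonoOn (fun x : ℝ => (1 + 1 / x) * Real.log (1 + x))
    (Set.Ioi 0) := by
  apply strictMonoOn_of_deriv_pos (convex_Ioi 0)
  · exact fun x hx => ((gderiv x hx).differentiableAt.continuousAt).continuousWithinAt
  · rw [interior_Ioi]
    intro x hx
    rw [Set.mem_Ioi] at hx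
    have hx0 : x ≠ 0 := hx.ne'
    have hx1 : (1 : ℝ) + x ≠ 0 := by linarith
    rw [(gderiv x hx).deriv]
    have hlog : Real.log (1 + x) < x := by
      have := Real.log_lt_sub_one_of_pos (x := 1 + x) (by linarith) (by linarith [hx.ne'])
      linarith
    have hlogpos : 0 < Real.log (1 + x) := Real.log_pos (by linarith)
    have h1 : (1 + 1 / x) * (1 / (1 + x)) = 1 / x := by
      field_simp
      ring
    have h2 : (x ^ 2)⁻¹ * Real.log (1 + x) < (x ^ 2)⁻¹ * x := by
      apply mul_lt_mul_of_pos_left hlog (by positivity)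
    have h3 : (x ^ 2)⁻¹ * x = 1 / x := by
      field_simp
    rw [h1]
    nlinarith

/-- Frailty-variance identification: if `σ, σ' > 0` and
`(1 + σ²)^(1 + 1/σ²) = (1 + σ'²)^(1 + 1/σ'²)`, then `σ = σ'`. -/
theorem frailty_variance_identification
    (σ σ' : ℝ) (hσ : 0 < σ) (hσ' : 0 < σ')
    (heq : (1 + σ ^ 2) ^ (1 + 1 / σ ^ 2) = (1 + σ' ^ 2) ^ (1 + 1 / σ' ^ 2)) :
    σ = σ' := by
  have h1 : (0:ℝ) < σ ^ 2 := by positivity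
  have h2 : (0:ℝ) < σ' ^ 2 := by positivity
  have hlogeq : (1 + 1 / σ ^ 2) * Real.log (1 + σ ^ 2)
      = (1 + 1 / σ' ^ 2) * Real.log (1 + σ' ^ 2) := by
    have := congrArg Real.log heq
    rwa [Real.log_rpow (by linarith), Real.log_rpow (by linarith)] at this
  have hsq : σ ^ 2 = σ' ^ 2 := gmono.injOn h1 h2 hlogeq
  nlinarith
end

section
/- The cross-ratio function of the shared Gamma frailty model is identically 1 + sigma^2: let sigma > 0, let L1, L2 be positive integers, and for k = 1,2 and j = 1,...,Lk let h^(k)_j : (0, infinity) -> (0, infinity) be continuous with H^(k)_j(t) = integral from 0 to t of h^(k)_j finite for all t; set H^(k) = sum over j of H^(k)_j and assume H^(k)(t) -> infinity as t -> infinity. Define S(t1,t2) = [1 + sigma^2 (H^(1)(t1) + H^(2)(t2))]^(-1/sigma^2) and f_{j1 j2}(t1,t2) = (1 + sigma^2) h^(1)_{j1}(t1) h^(2)_{j2}(t2) / [1 + sigma^2 (H^(1)(t1) + H^(2)(t2))]^(2 + 1/sigma^2). Then for all t1, t2 > 0 and all causes j1, j2, the quantity S(t1,t2) * f_{j1 j2}(t1,t2)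 divided by the product of (integral from t1 to infinity of the sum over j of f_{j j2}(u1, t2) du1) and (integral from t2 to infinity of the sum over j of f_{j1 j}(t1, u2) du2) equals 1 + sigma^2. -/
set_option maxHeartbeats 1000000

open MeasureTheory Set Filter

lemma gamma_tail_integral (σ : ℝ) (hσ : 0 < σ) {L : ℕ} (h : Fin L → ℝ → ℝ)
    (hcont : ∀ j, ContinuousOn (h j) (Set.Ioi 0))
    (hpos : ∀ j, ∀ t : ℝ, 0 < t → 0 < h j t)
    (hint : ∀ j, ∀ t : ℝ, 0 < t → IntegrableOn (h j) (Set.Ioc 0 t))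
    (HS : ℝ → ℝ) (hHS : ∀ t, HS t = ∑ j, ∫ u in Set.Ioc (0:ℝ) t, h j u)
    (htop : Filter.Tendsto HS Filter.atTop Filter.atTop)
    (c : ℝ) (hc : 0 ≤ c) (t : ℝ) (ht : 0 < t) :
    ∫ u in Set.Ioi t, (1 + σ ^ 2) * (∑ j, h j u) / (1 + σ ^ 2 * (HS u + c)) ^ (2 + 1 / σ ^ 2)
      = (1 + σ ^ 2 * (HS t + c)) ^ (-(1 + 1 / σ ^ 2)) := by
  have hσ2 : (0:ℝ) < σ ^ 2 := by positivity
  set p : ℝ := -(1 + 1 / σ ^ 2) with hp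
  have hq : (0:ℝ) < 1 + 1 / σ ^ 2 := by positivity
  -- continuity / integrability of the sum
  have hscont : ContinuousOn (fun u => ∑ j, h j u) (Set.Ioi (0:ℝ)) :=
    continuousOn_finset_sum _ fun j _ => hcont j
  have hsint : ∀ x : ℝ, 0 < x → IntegrableOn (fun u => ∑ j, h j u) (Set.Ioc 0 x) :=
    fun x hx => integrable_finset_sum _ fun j _ => hint j x hx
  have hsnonneg : ∀ x : ℝ, 0 < x → 0 ≤ ∑ j, h j x :=
    fun x hx => Finset.sum_nonneg fun j _ => (hpos j x hx).le
  have hHSnn : ∀ u : ℝ, 0 < u → 0 ≤ HS u := by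
    intro u hu
    rw [hHS]
    refine Finset.sum_nonneg fun j _ => ?_
    exact setIntegral_nonneg measurableSet_Ioc fun x hx => (hpos j x hx.1).le
  set B : ℝ → ℝ := fun u => 1 + σ ^ 2 * (HS u + c) with hB
  have hB1 : ∀ u : ℝ, 0 < u → (1:ℝ) ≤ B u := by
    intro u hu
    have h1 := hHSnn u hu
    simp only [hB]
    nlinarith
  have hBpos : ∀ u : ℝ, 0 < u → (0:ℝ) < B u := fun u hu => lt_of_lt_of_le one_pos (hB1 u hu)
  -- representation of HS on [t, ∞)
  have key : ∀ u : ℝ, t ≤ u → HS u = HS t + ∫ x in t..u, (∑ j, h j x) := by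
    intro u htu
    have hu : 0 < u := lt_of_lt_of_le ht htu
    rw [intervalIntegral.integral_of_le htu,
      integral_finset_sum _ (fun j _ => ((hint j u hu).mono_set (Set.Ioc_subset_Ioc_left ht.le))),
      hHS u, hHS t, ← Finset.sum_add_distrib]
    refine Finset.sum_congr rfl fun j _ => ?_
    rw [← setIntegral_union (Set.Ioc_disjoint_Ioc_of_le le_rfl) measurableSet_Ioc
      ((hint j u hu).mono_set (Set.Ioc_subset_Ioc_right htu))
      ((hint j u hu).mono_set (Set.Ioc_subset_Ioc_left ht.le)),
      Set.Ioc_union_Ioc_eq_Ioc ht.le htu]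
  -- derivative of HS on (t, ∞)
  have hHSderiv : ∀ x ∈ Set.Ioi t, HasDerivAt HS (∑ j, h j x) x := by
    intro x hx
    have hx0 : 0 < x := ht.trans hx
    have hii : IntervalIntegrable (fun u => ∑ j, h j u) volume t x := by
      have : IntegrableOn (fun u => ∑ j, h j u) (Set.uIoc t x) := by
        rw [Set.uIoc_of_le (le_of_lt hx)]
        exact (hsint x hx0).mono_set (Set.Ioc_subset_Ioc_left ht.le)
      exact intervalIntegrable_iff.mpr this
    have hms : StronglyMeasurableAtFilter (fun u => ∑ j, h j u) (nhds x) volume :=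
      hscont.stronglyMeasurableAtFilter isOpen_Ioi x hx0
    have hca : ContinuousAt (fun u => ∑ j, h j u) x :=
      hscont.continuousAt (isOpen_Ioi.mem_nhds hx0)
    have hD : HasDerivAt (fun u => ∫ s in t..u, (∑ j, h j s)) (∑ j, h j x) x :=
      intervalIntegral.integral_hasDerivAt_right hii hms hca
    have hprim : HasDerivAt (fun u => HS t + ∫ s in t..u, (∑ j, h j s)) (∑ j, h j x) x :=
      hD.const_add (HS t)
    refine hprim.congr_of_eventuallyEq ?_
    exact Filter.eventuallyEq_of_mem (isOpen_Ioi.mem_nhds hx)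
      (fun u hu => key u (le_of_lt hu))
  -- g and its derivative
  set g : ℝ → ℝ := fun u => -(B u) ^ p with hg
  have hgderiv : ∀ x ∈ Set.Ioi t,
      HasDerivAt g ((1 + σ ^ 2) * (∑ j, h j x) / (B x) ^ (2 + 1 / σ ^ 2)) x := by
    intro x hx
    have hx0 : 0 < x := ht.trans hx
    have hBx : 0 < B x := hBpos x hx0
    have hBder : HasDerivAt B (σ ^ 2 * (∑ j, h j x)) x :=
      (((hHSderiv x hx).add_const c).const_mul (σ ^ 2)).const_add 1
    have hr : HasDerivAt (fun u => (B u) ^ p) (σ ^ 2 * (∑ j, h j x) * p * (B x) ^ (p - 1)) x :=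
      hBder.rpow_const (Or.inl (ne_of_gt hBx))
    have : HasDerivAt g (-(σ ^ 2 * (∑ j, h j x) * p * (B x) ^ (p - 1))) x := hr.neg
    convert this using 1
    have hexp : p - 1 = -(2 + 1 / σ ^ 2) := by rw [hp]; ring
    rw [hexp, Real.rpow_neg hBx.le, div_eq_mul_inv, hp]
    field_simp
    ring
  have hnn : ∀ x ∈ Set.Ioi t,
      0 ≤ (1 + σ ^ 2) * (∑ j, h j x) / (B x) ^ (2 + 1 / σ ^ 2) := by
    intro x hx
    have hx0 : 0 < x := ht.trans hx
    have h1 := hsnonneg x hx0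
    have h2 : (0:ℝ) ≤ (B x) ^ (2 + 1 / σ ^ 2) := Real.rpow_nonneg (hBpos x hx0).le _
    exact div_nonneg (mul_nonneg (by positivity) h1) h2
  -- continuity of g within Ici t at t
  have hHScont : ContinuousWithinAt HS (Set.Ici t) t := by
    have hii : IntervalIntegrable (fun u => ∑ j, h j u) volume t t := by
      simp [IntervalIntegrable]
    have hmeas : StronglyMeasurableAtFilter (fun u => ∑ j, h j u) (nhdsWithin t (Set.Ioi t))
        volume :=
      (hscont.mono (Set.Ioi_subset_Ioi ht.le)).stronglyMeasurableAtFilter_nhdsWithin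
        measurableSet_Ioi t
    have hcw : ContinuousWithinAt (fun u => ∑ j, h j u) (Set.Ioi t) t :=
      (hscont.continuousAt (isOpen_Ioi.mem_nhds ht)).continuousWithinAt
    have hprim : ContinuousWithinAt (fun u => HS t + ∫ s in t..u, (∑ j, h j s))
        (Set.Ici t) t :=
      (((intervalIntegral.integral_hasDerivWithinAt_right hii hmeas
        hcw)).continuousWithinAt).const_add _
    exact hprim.congr (fun u hu => key u hu) (key t le_rfl)
  have hBcont : ContinuousWithinAt B (Set.Ici t) t :=
    (continuousWithinAt_const.mul (hHScont.add continuousWithinAt_const)).const_add 1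
  have hgcont : ContinuousWithinAt g (Set.Ici t) t :=
    (hBcont.rpow_const (Or.inl (ne_of_gt (hBpos t ht)))).neg
  -- limit at infinity
  have hBtop : Tendsto B atTop atTop := by
    apply tendsto_atTop_add_const_left
    exact (tendsto_atTop_add_const_right _ c htop).const_mul_atTop hσ2
  have hgl : Tendsto g atTop (nhds 0) := by
    have : Tendsto (fun u => (B u) ^ p) atTop (nhds 0) := by
      rw [hp]
      exact (tendsto_rpow_neg_atTop hq).comp hBtop
    simpa [hg] using this.neg
  have := integral_Ioi_of_hasDerivAt_of_nonneg hgcont hgderiv hnn hgl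
  rw [this]
  simp [hg, hB]

/-- The cross-ratio function of the shared Gamma frailty model is identically `1 + σ²`. -/
theorem shared_gamma_frailty_cross_ratio
    (σ : ℝ) (hσ : 0 < σ) (L₁ L₂ : ℕ) (hL₁ : 0 < L₁) (hL₂ : 0 < L₂)
    (h₁ : Fin L₁ → ℝ → ℝ) (h₂ : Fin L₂ → ℝ → ℝ)
    (hcont₁ : ∀ j, ContinuousOn (h₁ j) (Set.Ioi 0))
    (hcont₂ : ∀ j, ContinuousOn (h₂ j) (Set.Ioi 0))
    (hpos₁ : ∀ j, ∀ t : ℝ, 0 < t → 0 < h₁ j t)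
    (hpos₂ : ∀ j, ∀ t : ℝ, 0 < t → 0 < h₂ j t)
    (hint₁ : ∀ j, ∀ t : ℝ, 0 < t → IntegrableOn (h₁ j) (Set.Ioc 0 t))
    (hint₂ : ∀ j, ∀ t : ℝ, 0 < t → IntegrableOn (h₂ j) (Set.Ioc 0 t))
    (H₁ : Fin L₁ → ℝ → ℝ) (H₂ : Fin L₂ → ℝ → ℝ)
    (hH₁ : ∀ j t, H₁ j t = ∫ u in Set.Ioc (0 : ℝ) t, h₁ j u)
    (hH₂ : ∀ j t, H₂ j t = ∫ u in Set.Ioc (0 : ℝ) t, h₂ j u)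
    (HS₁ HS₂ : ℝ → ℝ)
    (hHS₁ : ∀ t, HS₁ t = ∑ j, H₁ j t) (hHS₂ : ∀ t, HS₂ t = ∑ j, H₂ j t)
    (htop₁ : Filter.Tendsto HS₁ Filter.atTop Filter.atTop)
    (htop₂ : Filter.Tendsto HS₂ Filter.atTop Filter.atTop)
    (S : ℝ → ℝ → ℝ)
    (hS : ∀ t₁ t₂ : ℝ, S t₁ t₂ = (1 + σ ^ 2 * (HS₁ t₁ + HS₂ t₂)) ^ (-(1 / σ ^ 2)))
    (f : Fin L₁ → Fin L₂ → ℝ → ℝ → ℝ)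
    (hf : ∀ j₁ j₂, ∀ t₁ t₂ : ℝ, f j₁ j₂ t₁ t₂ =
      (1 + σ ^ 2) * h₁ j₁ t₁ * h₂ j₂ t₂ /
        (1 + σ ^ 2 * (HS₁ t₁ + HS₂ t₂)) ^ (2 + 1 / σ ^ 2)) :
    ∀ t₁ : ℝ, 0 < t₁ → ∀ t₂ : ℝ, 0 < t₂ → ∀ (j₁ : Fin L₁) (j₂ : Fin L₂),
      S t₁ t₂ * f j₁ j₂ t₁ t₂ /
        ((∫ u in Set.Ioi t₁, ∑ j, f j j₂ u t₂) *
          (∫ u in Set.Ioi t₂, ∑ j, f j₁ j t₁ u)) = 1 + σ ^ 2 := by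
  intro t₁ ht₁ t₂ ht₂ j₁ j₂
  have hσ2 : (0:ℝ) < σ ^ 2 := by positivity
  have hHS₁' : ∀ t, HS₁ t = ∑ j, ∫ u in Set.Ioc (0:ℝ) t, h₁ j u := by
    intro t; rw [hHS₁]; exact Finset.sum_congr rfl fun j _ => hH₁ j t
  have hHS₂' : ∀ t, HS₂ t = ∑ j, ∫ u in Set.Ioc (0:ℝ) t, h₂ j u := by
    intro t; rw [hHS₂]; exact Finset.sum_congr rfl fun j _ => hH₂ j t
  have hnn₁ : 0 ≤ HS₁ t₁ := by
    rw [hHS₁']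
    exact Finset.sum_nonneg fun j _ =>
      setIntegral_nonneg measurableSet_Ioc fun x hx => (hpos₁ j x hx.1).le
  have hnn₂ : 0 ≤ HS₂ t₂ := by
    rw [hHS₂']
    exact Finset.sum_nonneg fun j _ =>
      setIntegral_nonneg measurableSet_Ioc fun x hx => (hpos₂ j x hx.1).le
  set A : ℝ := 1 + σ ^ 2 * (HS₁ t₁ + HS₂ t₂) with hA
  have hApos : (0:ℝ) < A := by rw [hA]; nlinarith
  -- first integral
  have I₁ : (∫ u in Set.Ioi t₁, ∑ j, f j j₂ u t₂)
      = h₂ j₂ t₂ * A ^ (-(1 + 1 / σ ^ 2)) := by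
    have e1 : ∀ u : ℝ, (∑ j, f j j₂ u t₂)
        = h₂ j₂ t₂ * ((1 + σ ^ 2) * (∑ j, h₁ j u) /
            (1 + σ ^ 2 * (HS₁ u + HS₂ t₂)) ^ (2 + 1 / σ ^ 2)) := by
      intro u
      simp only [hf]
      rw [← Finset.sum_div, ← mul_div_assoc]
      congr 1
      simp only [Finset.mul_sum]
      exact Finset.sum_congr rfl fun j _ => by ring
    simp only [e1]
    rw [integral_const_mul,
      gamma_tail_integral σ hσ h₁ hcont₁ hpos₁ hint₁ HS₁ hHS₁' htop₁ (HS₂ t₂) hnn₂ t₁ ht₁]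
  -- second integral
  have I₂ : (∫ u in Set.Ioi t₂, ∑ j, f j₁ j t₁ u)
      = h₁ j₁ t₁ * A ^ (-(1 + 1 / σ ^ 2)) := by
    have e2 : ∀ u : ℝ, (∑ j, f j₁ j t₁ u)
        = h₁ j₁ t₁ * ((1 + σ ^ 2) * (∑ j, h₂ j u) /
            (1 + σ ^ 2 * (HS₂ u + HS₁ t₁)) ^ (2 + 1 / σ ^ 2)) := by
      intro u
      simp only [hf, add_comm (HS₁ t₁) (HS₂ u)]
      rw [← Finset.sum_div, ← mul_div_assoc]
      congr 1
      simp only [Finset.mul_sum]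
      exact Finset.sum_congr rfl fun j _ => by ring
    simp only [e2]
    rw [integral_const_mul,
      gamma_tail_integral σ hσ h₂ hcont₂ hpos₂ hint₂ HS₂ hHS₂' htop₂ (HS₁ t₁) hnn₁ t₂ ht₂,
      add_comm (HS₂ t₂) (HS₁ t₁), ← hA]
  rw [I₁, I₂, hS, hf, ← hA]
  have hh₁ : 0 < h₁ j₁ t₁ := hpos₁ j₁ t₁ ht₁
  have hh₂ : 0 < h₂ j₂ t₂ := hpos₂ j₂ t₂ ht₂
  have num : A ^ (-(1 / σ ^ 2)) * ((1 + σ ^ 2) * h₁ j₁ t₁ * h₂ j₂ t₂ / A ^ (2 + 1 / σ ^ 2))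
      = (1 + σ ^ 2) * (h₁ j₁ t₁ * h₂ j₂ t₂ * A ^ (-(2 + 2 / σ ^ 2))) := by
    have : A ^ (-(2 + 2 / σ ^ 2) : ℝ) = A ^ (-(1 / σ ^ 2) : ℝ) / A ^ (2 + 1 / σ ^ 2 : ℝ) := by
      rw [← Real.rpow_sub hApos]
      norm_num
      ring_nf
    rw [this]
    ring
  have den : h₂ j₂ t₂ * A ^ (-(1 + 1 / σ ^ 2)) * (h₁ j₁ t₁ * A ^ (-(1 + 1 / σ ^ 2)))
      = h₁ j₁ t₁ * h₂ j₂ t₂ * A ^ (-(2 + 2 / σ ^ 2)) := by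
    rw [show (-(2 + 2 / σ ^ 2) : ℝ) = -(1 + 1 / σ ^ 2) + -(1 + 1 / σ ^ 2) by ring,
      Real.rpow_add hApos]
    ring
  rw [num, den, mul_div_assoc]
  have hpos : 0 < h₁ j₁ t₁ * h₂ j₂ t₂ * A ^ (-(2 + 2 / σ ^ 2)) := by
    have := Real.rpow_pos_of_pos hApos (-(2 + 2 / σ ^ 2))
    positivity
  rw [div_self (ne_of_gt hpos), mul_one]
end

section
/- Identification of the correlation parameter in the correlated Gamma frailty model: let sigma_1, sigma_2 > 0, let rho, tilde-rho be real numbers, and let H_1, H_2 : (0, infinity) -> [0, infinity) be functions such that there exist t1*, t2* > 0 with H_1(t1*) > 0 and H_2(t2*) > 0. Write A(t1,t2) = 1 + sigma_1^2 H_1(t1) + sigma_2^2 H_2(t2) and B_k(t) = 1 + sigma_k^2 H_k(t). If for all t1, t2 > 0, A(t1,t2)^(-rho/(sigma_1 sigma_2)) * B_1(t1)^(rho/(sigma_1 sigma_2) - 1/sigma_1^2) * B_2(t2)^(rho/(sigma_1 sigma_2) - 1/sigma_2^2) = A(t1,t2)^(-tilde-rho/(sigma_1 sigma_2)) * B_1(t1)^(tilde-rho/(sigma_1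 sigma_2) - 1/sigma_1^2) * B_2(t2)^(tilde-rho/(sigma_1 sigma_2) - 1/sigma_2^2), then rho = tilde-rho. -/
/-- Identification of the correlation parameter in the correlated Gamma frailty model:
equality of the two unconditional joint survival functions (with common baseline and
common `σ₁, σ₂`) forces `ρ = ρ'`. -/
theorem correlated_gamma_frailty_rho_identification
    (σ₁ σ₂ ρ ρ' : ℝ) (hσ₁ : 0 < σ₁) (hσ₂ : 0 < σ₂)
    (H₁ H₂ : ℝ → ℝ)
    (hH₁nonneg : ∀ t : ℝ, 0 < t → 0 ≤ H₁ t)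
    (hH₂nonneg : ∀ t : ℝ, 0 < t → 0 ≤ H₂ t)
    (t₁s t₂s : ℝ) (ht₁s : 0 < t₁s) (ht₂s : 0 < t₂s)
    (hH₁pos : 0 < H₁ t₁s) (hH₂pos : 0 < H₂ t₂s)
    (heq : ∀ t₁ : ℝ, 0 < t₁ → ∀ t₂ : ℝ, 0 < t₂ →
      (1 + σ₁ ^ 2 * H₁ t₁ + σ₂ ^ 2 * H₂ t₂) ^ (-(ρ / (σ₁ * σ₂))) *
        (1 + σ₁ ^ 2 * H₁ t₁) ^ (ρ / (σ₁ * σ₂) - 1 / σ₁ ^ 2) *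
        (1 + σ₂ ^ 2 * H₂ t₂) ^ (ρ / (σ₁ * σ₂) - 1 / σ₂ ^ 2) =
      (1 + σ₁ ^ 2 * H₁ t₁ + σ₂ ^ 2 * H₂ t₂) ^ (-(ρ' / (σ₁ * σ₂))) *
        (1 + σ₁ ^ 2 * H₁ t₁) ^ (ρ' / (σ₁ * σ₂) - 1 / σ₁ ^ 2) *
        (1 + σ₂ ^ 2 * H₂ t₂) ^ (ρ' / (σ₁ * σ₂) - 1 / σ₂ ^ 2)) :
    ρ = ρ' := by
  have key := heq t₁s ht₁s t₂s ht₂s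
  set a : ℝ := σ₁ ^ 2 * H₁ t₁s with ha
  set b : ℝ := σ₂ ^ 2 * H₂ t₂s with hb
  have hapos : 0 < a := mul_pos (pow_pos hσ₁ 2) hH₁pos
  have hbpos : 0 < b := mul_pos (pow_pos hσ₂ 2) hH₂pos
  have hA : (0:ℝ) < 1 + a + b := by linarith
  have hB₁ : (0:ℝ) < 1 + a := by linarith
  have hB₂ : (0:ℝ) < 1 + b := by linarith
  set r : ℝ := ρ / (σ₁ * σ₂)
  set r' : ℝ := ρ' / (σ₁ * σ₂)
  -- rewrite the exponents
  have e₁ : r - 1 / σ₁ ^ 2 = r + -(1 / σ₁ ^ 2) := by ring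
  have e₂ : r - 1 / σ₂ ^ 2 = r + -(1 / σ₂ ^ 2) := by ring
  have e₁' : r' - 1 / σ₁ ^ 2 = r' + -(1 / σ₁ ^ 2) := by ring
  have e₂' : r' - 1 / σ₂ ^ 2 = r' + -(1 / σ₂ ^ 2) := by ring
  rw [e₁, e₂, e₁', e₂', Real.rpow_add hB₁, Real.rpow_add hB₂, Real.rpow_add hB₁,
    Real.rpow_add hB₂] at key
  have hc₁ : (1 + a) ^ (-((1:ℝ) / σ₁ ^ 2)) ≠ 0 := ne_of_gt (Real.rpow_pos_of_pos hB₁ _)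
  have hc₂ : (1 + b) ^ (-((1:ℝ) / σ₂ ^ 2)) ≠ 0 := ne_of_gt (Real.rpow_pos_of_pos hB₂ _)
  have key2 : (1 + a + b) ^ (-r) * ((1 + a) ^ r * (1 + b) ^ r) =
      (1 + a + b) ^ (-r') * ((1 + a) ^ r' * (1 + b) ^ r') := by
    refine mul_right_cancel₀ (mul_ne_zero hc₁ hc₂) ?_
    linear_combination key
  -- turn into ((1+a)(1+b)/(1+a+b))^r = same with r'
  have hx : (1:ℝ) < (1 + a) * (1 + b) / (1 + a + b) := by
    rw [lt_div_iff₀ hA]; nlinarith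
  have hxpos : (0:ℝ) < (1 + a) * (1 + b) / (1 + a + b) := lt_trans one_pos hx
  have key3 : ((1 + a) * (1 + b) / (1 + a + b)) ^ r =
      ((1 + a) * (1 + b) / (1 + a + b)) ^ r' := by
    rw [Real.div_rpow (by positivity) hA.le, Real.div_rpow (by positivity) hA.le,
      Real.mul_rpow hB₁.le hB₂.le, Real.mul_rpow hB₁.le hB₂.le]
    rw [div_eq_div_iff (ne_of_gt (Real.rpow_pos_of_pos hA r)) (ne_of_gt (Real.rpow_pos_of_pos hA r'))]
    have hAr : (1 + a + b) ^ (-r) = ((1 + a + b) ^ r)⁻¹ := Real.rpow_neg hA.le r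
    have hAr' : (1 + a + b) ^ (-r') = ((1 + a + b) ^ r')⁻¹ := Real.rpow_neg hA.le r'
    rw [hAr, hAr'] at key2
    field_simp [hc₁, hc₂] at key2
    linarith [key2]
  have hrr : r = r' := by
    rcases lt_trichotomy r r' with h | h | h
    · exact absurd key3 (ne_of_lt ((Real.rpow_lt_rpow_left_iff hx).mpr h))
    · exact h
    · exact absurd key3.symm (ne_of_lt ((Real.rpow_lt_rpow_left_iff hx).mpr h))
  have hσ : σ₁ * σ₂ ≠ 0 := ne_of_gt (mul_pos hσ₁ hσ₂)
  rw [show r = ρ / (σ₁ * σ₂) from rfl, show r' = ρ' / (σ₁ * σ₂) from rfl, div_left_inj' hσ] at hrr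
  exact hrr
end

section
/- Unconditional joint survival function of the correlated Gamma frailty model: let kappa_0, kappa_1, kappa_2, mu_0 > 0, set mu_k = kappa_0 + kappa_k, sigma_k = 1/sqrt(mu_k) for k = 1,2, and rho = kappa_0/sqrt(mu_1 mu_2). Then for all c1, c2 >= 0, the triple integral over (0,infinity)^3 of exp( -((mu_0/mu_1) y_0 + y_1) c1 - ((mu_0/mu_2) y_0 + y_2) c2 ) times the product over i = 0,1,2 of (mu_i^{kappa_i}/Gamma(kappa_i)) exp(-mu_i y_i) y_i^{kappa_i - 1}, with respect to dy_0 dy_1 dy_2, equals (1 + sigma_1^2 c1 + sigma_2^2 c2)^(-rho/(sigma_1 sigma_2)) * (1 + sigma_1^2 c1)^(-(1/sigma_1^2 - rho/(sigma_1 sigma_2))) * (1 + sigma_2^2 c2)^(-(1/sigma_2^2 - rho/(sigma_1 sigma_2))). -/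
open MeasureTheory

lemma gamma_laplace (μ κ s : ℝ) (hμ : 0 < μ) (hκ : 0 < κ) (hs : 0 ≤ s) :
    (∫ y in Set.Ioi (0 : ℝ),
        Real.exp (-(s * y)) * (μ ^ κ / Real.Gamma κ * Real.exp (-μ * y) * y ^ (κ - 1)))
      = (1 + s / μ) ^ (-κ) := by
  have hb : 0 < μ + s := by linarith
  have hΓ : 0 < Real.Gamma κ := Real.Gamma_pos_of_pos hκ
  have h1 : ∀ y : ℝ,
      Real.exp (-(s * y)) * (μ ^ κ / Real.Gamma κ * Real.exp (-μ * y) * y ^ (κ - 1))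
        = (μ ^ κ / Real.Gamma κ) * (y ^ (κ - 1) * Real.exp (-((μ + s) * y))) := by
    intro y
    rw [show -((μ + s) * y) = -(s * y) + -μ * y by ring, Real.exp_add]
    ring
  simp_rw [h1, integral_const_mul, Real.integral_rpow_mul_exp_neg_mul_Ioi hκ hb]
  have h2 : (1 : ℝ) + s / μ = (μ + s) / μ := by field_simp
  rw [h2, Real.div_rpow hb.le hμ.le, Real.rpow_neg hb.le, Real.rpow_neg hμ.le,
    Real.div_rpow (by norm_num) hb.le, Real.one_rpow]
  have hμκ : (0 : ℝ) < μ ^ κ := Real.rpow_pos_of_pos hμ κ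
  have hbκ : (0 : ℝ) < (μ + s) ^ κ := Real.rpow_pos_of_pos hb κ
  field_simp

/-- Unconditional joint survival function of the correlated Gamma frailty model:
`E[exp(-ε⁽¹⁾c₁ - ε⁽²⁾c₂)]`, computed as a triple integral against the three independent
Gamma densities, equals the stated product of powers. -/
theorem correlated_gamma_frailty_survival
    (κ₀ κ₁ κ₂ μ₀ : ℝ) (hκ₀ : 0 < κ₀) (hκ₁ : 0 < κ₁) (hκ₂ : 0 < κ₂) (hμ₀ : 0 < μ₀)
    (μ₁ μ₂ σ₁ σ₂ ρ : ℝ)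
    (hμ₁ : μ₁ = κ₀ + κ₁) (hμ₂ : μ₂ = κ₀ + κ₂)
    (hσ₁ : σ₁ = 1 / Real.sqrt μ₁) (hσ₂ : σ₂ = 1 / Real.sqrt μ₂)
    (hρ : ρ = κ₀ / Real.sqrt (μ₁ * μ₂))
    (c₁ c₂ : ℝ) (hc₁ : 0 ≤ c₁) (hc₂ : 0 ≤ c₂) :
    (∫ y₀ in Set.Ioi (0 : ℝ), ∫ y₁ in Set.Ioi (0 : ℝ), ∫ y₂ in Set.Ioi (0 : ℝ),
      Real.exp (-(μ₀ / μ₁ * y₀ + y₁) * c₁ - (μ₀ / μ₂ * y₀ + y₂) * c₂) *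
        ((μ₀ ^ κ₀ / Real.Gamma κ₀ * Real.exp (-μ₀ * y₀) * y₀ ^ (κ₀ - 1)) *
          (μ₁ ^ κ₁ / Real.Gamma κ₁ * Real.exp (-μ₁ * y₁) * y₁ ^ (κ₁ - 1)) *
          (μ₂ ^ κ₂ / Real.Gamma κ₂ * Real.exp (-μ₂ * y₂) * y₂ ^ (κ₂ - 1)))) =
    (1 + σ₁ ^ 2 * c₁ + σ₂ ^ 2 * c₂) ^ (-(ρ / (σ₁ * σ₂))) *
      (1 + σ₁ ^ 2 * c₁) ^ (-(1 / σ₁ ^ 2 - ρ / (σ₁ * σ₂))) *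
      (1 + σ₂ ^ 2 * c₂) ^ (-(1 / σ₂ ^ 2 - ρ / (σ₁ * σ₂))) := by
  have hμ₁p : 0 < μ₁ := by rw [hμ₁]; linarith
  have hμ₂p : 0 < μ₂ := by rw [hμ₂]; linarith
  have hA : 0 ≤ μ₀ / μ₁ * c₁ + μ₀ / μ₂ * c₂ := by positivity
  have key : ∀ y₀ y₁ y₂ : ℝ,
      Real.exp (-(μ₀ / μ₁ * y₀ + y₁) * c₁ - (μ₀ / μ₂ * y₀ + y₂) * c₂) *
        ((μ₀ ^ κ₀ / Real.Gamma κ₀ * Real.exp (-μ₀ * y₀) * y₀ ^ (κ₀ - 1)) *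
          (μ₁ ^ κ₁ / Real.Gamma κ₁ * Real.exp (-μ₁ * y₁) * y₁ ^ (κ₁ - 1)) *
          (μ₂ ^ κ₂ / Real.Gamma κ₂ * Real.exp (-μ₂ * y₂) * y₂ ^ (κ₂ - 1)))
      = (Real.exp (-((μ₀ / μ₁ * c₁ + μ₀ / μ₂ * c₂) * y₀)) *
            (μ₀ ^ κ₀ / Real.Gamma κ₀ * Real.exp (-μ₀ * y₀) * y₀ ^ (κ₀ - 1))) *
          ((Real.exp (-(c₁ * y₁)) *
              (μ₁ ^ κ₁ / Real.Gamma κ₁ * Real.exp (-μ₁ * y₁) * y₁ ^ (κ₁ - 1))) *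
            (Real.exp (-(c₂ * y₂)) *
              (μ₂ ^ κ₂ / Real.Gamma κ₂ * Real.exp (-μ₂ * y₂) * y₂ ^ (κ₂ - 1)))) := by
    intro y₀ y₁ y₂
    rw [show -(μ₀ / μ₁ * y₀ + y₁) * c₁ - (μ₀ / μ₂ * y₀ + y₂) * c₂
        = -((μ₀ / μ₁ * c₁ + μ₀ / μ₂ * c₂) * y₀) + (-(c₁ * y₁) + -(c₂ * y₂)) by ring,
      Real.exp_add, Real.exp_add]
    ring
  simp_rw [key, integral_const_mul, integral_mul_const,
    gamma_laplace μ₀ κ₀ _ hμ₀ hκ₀ hA,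
    gamma_laplace μ₁ κ₁ c₁ hμ₁p hκ₁ hc₁,
    gamma_laplace μ₂ κ₂ c₂ hμ₂p hκ₂ hc₂]
  have hs1 : σ₁ ^ 2 = 1 / μ₁ := by
    rw [hσ₁, div_pow, one_pow, Real.sq_sqrt hμ₁p.le]
  have hs2 : σ₂ ^ 2 = 1 / μ₂ := by
    rw [hσ₂, div_pow, one_pow, Real.sq_sqrt hμ₂p.le]
  have hsq1 : (0 : ℝ) < Real.sqrt μ₁ := Real.sqrt_pos.mpr hμ₁p
  have hsq2 : (0 : ℝ) < Real.sqrt μ₂ := Real.sqrt_pos.mpr hμ₂p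
  have hρκ : ρ / (σ₁ * σ₂) = κ₀ := by
    rw [hρ, hσ₁, hσ₂, Real.sqrt_mul hμ₁p.le]
    field_simp
  have h1 : 1 / σ₁ ^ 2 - ρ / (σ₁ * σ₂) = κ₁ := by
    rw [hρκ, hs1]; field_simp; linarith [hμ₁]
  have h2 : 1 / σ₂ ^ 2 - ρ / (σ₁ * σ₂) = κ₂ := by
    rw [hρκ, hs2]; field_simp; linarith [hμ₂]
  have hAdiv : 1 + (μ₀ / μ₁ * c₁ + μ₀ / μ₂ * c₂) / μ₀ = 1 + σ₁ ^ 2 * c₁ + σ₂ ^ 2 * c₂ := by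
    rw [hs1, hs2]; field_simp; ring
  have hd1 : 1 + c₁ / μ₁ = 1 + σ₁ ^ 2 * c₁ := by rw [hs1]; ring
  have hd2 : 1 + c₂ / μ₂ = 1 + σ₂ ^ 2 * c₂ := by rw [hs2]; ring
  rw [hAdiv, hd1, hd2, h1, h2, hρκ]
  ring
end
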